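/- For any f ∈ ℍ[z], any γ ∈ [α] (α non-real): the right evaluation f^{er}(γ) equals (α−\bar{α})⁻¹[f^{eℓ}(α)γ − \bar{α} f^{eℓ}(α) + α f^{eℓ}(\bar{α}) − f^{eℓ}(\bar{α})γ]. -/

import Mathlib

open Polynomial

noncomputable def levalQ (α : Quaternion ℝ) (f : Polynomial (Quaternion ℝ)) : Quaternion ℝ :=
  f.sum fun j a => α ^ j * a

/-- coefficients s, t with x^n = s n * x + t n for any x satisfying x² = Tx - N -/
def stQ (T N : ℝ) : ℕ → ℝ × ℝ
  | 0 => (0, 1)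
  | n+1 => (T * (stQ T N n).1 + (stQ T N n).2, -(N * (stQ T N n).1))

lemma pow_expand (T N : ℝ) (x : Quaternion ℝ)
    (hx : x * x = (T : Quaternion ℝ) * x - (N : Quaternion ℝ)) (n : ℕ) :
    x ^ n = ((stQ T N n).1 : Quaternion ℝ) * x + ((stQ T N n).2 : Quaternion ℝ) := by
  induction n with
  | zero => simp [stQ]
  | succ n ih =>
      rw [pow_succ, ih, stQ]
      push_cast
      rw [add_mul, mul_assoc, hx]
      simp only [mul_sub, ← mul_assoc, ← Quaternion.coe_mul, add_mul]
      rw [mul_comm (stQ T N n).1 T, mul_comm (stQ T N n).1 N]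
      abel

lemma term_id (α β γ a : Quaternion ℝ) (S T : ℝ) (hc : α * β = β * α) :
    (α - β) * (a * ((S : Quaternion ℝ) * γ + (T : Quaternion ℝ))) =
      ((S : Quaternion ℝ) * α + (T : Quaternion ℝ)) * a * γ
        - β * (((S : Quaternion ℝ) * α + (T : Quaternion ℝ)) * a)
        + α * (((S : Quaternion ℝ) * β + (T : Quaternion ℝ)) * a)
        - ((S : Quaternion ℝ) * β + (T : Quaternion ℝ)) * a * γ := by
  have hca : β * (α * a) = α * (β * a) := by rw [← mul_assoc, ← hc, mul_assoc]
  simp only [Quaternion.coe_mul_eq_smul, smul_mul_assoc, mul_smul_comm,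
    Quaternion.mul_coe_eq_smul, add_mul, mul_add, smul_sub, smul_add, sub_mul, mul_sub,
    mul_assoc]
  rw [hca]
  module

theorem stmt9 (α : Quaternion ℝ) (hα : α.im ≠ 0) (f : Polynomial (Quaternion ℝ))
    (γ : Quaternion ℝ) (hγ : ∃ h : Quaternion ℝ, h ≠ 0 ∧ γ = h⁻¹ * α * h) :
    f.eval γ = (α - star α)⁻¹ *
      (levalQ α f * γ - star α * levalQ α f + α * levalQ (star α) f
        - levalQ (star α) f * γ) := by
  obtain ⟨h, hh, hγe⟩ := hγ
  set T : ℝ := 2 * α.re with hT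
  set N : ℝ := Quaternion.normSq α with hN
  have hβ : star α = (T : Quaternion ℝ) - α := by
    rw [eq_sub_iff_add_eq']; exact Quaternion.self_add_star' α
  have hqα : α * α = (T : Quaternion ℝ) * α - (N : Quaternion ℝ) := by
    have h1 : (T : Quaternion ℝ) * α - α * α = (N : Quaternion ℝ) := by
      rw [Quaternion.coe_commutes, ← mul_sub, ← hβ, Quaternion.self_mul_star]
    rw [← h1, sub_sub_cancel]
  have hqβ : star α * star α = (T : Quaternion ℝ) * star α - (N : Quaternion ℝ) := by
    have h1 : (T : Quaternion ℝ) * star α - star α * star α = (N : Quaternion ℝ) := by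
      rw [Quaternion.coe_commutes, ← mul_sub, hβ, sub_sub_cancel, ← hβ,
        Quaternion.star_mul_self]
    rw [← h1, sub_sub_cancel]
  have hqγ : γ * γ = (T : Quaternion ℝ) * γ - (N : Quaternion ℝ) := by
    have h2 : γ * γ = h⁻¹ * (α * α) * h := by
      rw [hγe]; simp only [mul_assoc]; rw [mul_inv_cancel_left₀ hh]
    rw [h2, hqα, hγe]
    simp only [mul_sub, sub_mul, mul_assoc]
    congr 1
    · rw [← mul_assoc h⁻¹, ← Quaternion.coe_commutes, mul_assoc]
    · rw [Quaternion.coe_commutes, inv_mul_cancel_left₀ hh]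
  have hne : α - star α ≠ 0 := by
    intro h0
    apply hα
    have h1 : α = star α := sub_eq_zero.mp h0
    have h2 := congrArg Quaternion.im h1
    rw [Quaternion.im_star] at h2
    have h3 : α.im + α.im = 0 := by nth_rewrite 1 [h2]; abel
    have h4 : (2 : ℝ) • α.im = 0 := by rw [two_smul]; exact h3
    exact (smul_eq_zero.mp h4).resolve_left two_ne_zero
  have hc : α * star α = star α * α := by rw [Quaternion.self_mul_star, Quaternion.star_mul_self]
  suffices key : (α - star α) * f.eval γ =
      levalQ α f * γ - star α * levalQ α f + α * levalQ (star α) f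
        - levalQ (star α) f * γ by
    rw [← key, ← mul_assoc, inv_mul_cancel₀ hne, one_mul]
  rw [Polynomial.eval_eq_sum, levalQ, levalQ]
  simp only [Polynomial.sum_def]
  rw [Finset.mul_sum, Finset.sum_mul, Finset.mul_sum, Finset.mul_sum, Finset.sum_mul,
    ← Finset.sum_sub_distrib, ← Finset.sum_add_distrib, ← Finset.sum_sub_distrib]
  refine Finset.sum_congr rfl fun j _ => ?_
  rw [pow_expand T N α hqα j, pow_expand T N (star α) hqβ j, pow_expand T N γ hqγ j]
  exact term_id α (star α) γ (f.coeff j) (stQ T N j).1 (stQ T N j).2 hc
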